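/- Let N be a finite nonempty player set and for each nonempty S ⊆ N let a_S < b_S be reals; set μ_S = (a_S + b_S)/2. Suppose there exist d, r : N → ℝ with r_i ≥ 0 for all i, d(N) = μ_N, r(N) = 1, such that for every nonempty S ⊆ N the pushforward of Unif[a_N, b_N] under the map z ↦ d(S) + r(S)·(z − μ_N) second-order stochastically dominates Unif[a_S, b_S]. Then both the core of the mean game μ (value μ_S on each nonempty S, 0 on ∅) and the core of the lower bound game a (value a_S on each nonempty S, 0 on ∅) are nonempty. -/

import Mathlib

open MeasureTheory ProbabilityTheory
open scoped NNReal ENNReal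

/-- `P` second-order stochastically dominates `Q`. -/
def SSD (P Q : Measure ℝ) : Prop :=
  ∀ u : ℝ, (∫ z in Set.Iic u, (cdf P z - cdf Q z)) ≤ 0

/-- The uniform probability measure on the interval `[a, b]`. -/
noncomputable def unif (a b : ℝ) : Measure ℝ :=
  (ENNReal.ofReal (b - a))⁻¹ • (volume.restrict (Set.Icc a b))

/-- The core of a TU-game `v` on the finite player set `N`. -/
def core {N : Type*} [Fintype N] (v : Finset N → ℝ) : Set (N → ℝ) :=
  {x | (∀ S : Finset N, v S ≤ ∑ i ∈ S, x i) ∧ ∑ i : N, x i = v Finset.univ}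

section Aux
open Set

noncomputable def F (a b u : ℝ) : ℝ := max 0 (min ((u - a) / (b - a)) 1)

noncomputable def Fd (c u : ℝ) : ℝ := if c ≤ u then 1 else 0

lemma unif_Iic (a b u : ℝ) : unif a b (Iic u) = (ENNReal.ofReal (b - a))⁻¹ * ENNReal.ofReal (min b u - a) := by
  rw [unif, Measure.smul_apply, Measure.restrict_apply measurableSet_Iic]
  have : Iic u ∩ Icc a b = Icc a (min b u) := by
    ext z; simp [Icc, and_comm, and_assoc, le_min_iff]
  rw [this, Real.volume_Icc, smul_eq_mul]

lemma unif_prob {a b : ℝ} (h : a < b) : IsProbabilityMeasure (unif a b) := by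
  constructor
  rw [unif, Measure.smul_apply, Measure.restrict_apply MeasurableSet.univ, univ_inter,
    Real.volume_Icc, smul_eq_mul, ENNReal.inv_mul_cancel]
  · simp [sub_pos.2 h]; linarith
  · exact ENNReal.ofReal_ne_top

lemma cdf_unif {a b : ℝ} (h : a < b) : cdf (unif a b) = fun u => F a b u := by
  have := unif_prob h
  have hba : (0:ℝ) < b - a := sub_pos.2 h
  funext u
  rw [cdf_eq_real, measureReal_def, unif_Iic, ENNReal.toReal_mul, ENNReal.toReal_inv,
    ENNReal.toReal_ofReal hba.le, ENNReal.toReal_ofReal']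
  unfold F
  rcases le_total b u with hc | hc
  · rw [min_eq_left hc, min_eq_right (by rw [le_div_iff₀ hba]; linarith),
      max_eq_left (by linarith), max_eq_right zero_le_one]
    field_simp
  · rw [min_eq_right hc, min_eq_left (by rw [div_le_one hba]; linarith)]
    rcases le_total (u - a) 0 with h0 | h0
    · rw [max_eq_right h0, mul_zero, max_eq_left (by exact div_nonpos_of_nonpos_of_nonneg h0 hba.le)]
    · rw [max_eq_left h0, max_eq_right (div_nonneg h0 hba.le)]; field_simp


lemma F_cont (a b : ℝ) : Continuous (fun u => F a b u) :=
  continuous_const.max (((continuous_id.sub continuous_const).div_const _).min continuous_const)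

lemma F_zero {a b z : ℝ} (h : a < b) (hz : z ≤ a) : F a b z = 0 := by
  unfold F
  rw [max_eq_left]
  exact le_trans (min_le_left _ _) (div_nonpos_of_nonpos_of_nonneg (by linarith) (by linarith))

lemma F_eq_lin {a b z : ℝ} (h : a < b) (ha : a ≤ z) (hz : z ≤ b) : F a b z = (z - a) / (b - a) := by
  unfold F
  rw [min_eq_left (by rw [div_le_one (by linarith)]; linarith)]
  rw [max_eq_right (div_nonneg (by linarith) (by linarith))]

lemma F_one {a b z : ℝ} (h : a < b) (hz : b ≤ z) : F a b z = 1 := by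
  unfold F
  rw [min_eq_right (by rw [le_div_iff₀ (by linarith)]; linarith), max_eq_right zero_le_one]

lemma integrableF (a b u : ℝ) (h : a < b) : IntegrableOn (fun z => F a b z) (Iic u) := by
  rcases le_total u a with hu | hu
  · exact (integrableOn_congr_fun (s := Iic u) (fun z hz => F_zero h (le_trans hz hu)) measurableSet_Iic).2
      (integrableOn_zero)
  · rw [← Iic_union_Ioc_eq_Iic hu, integrableOn_union]
    constructor
    · exact (integrableOn_congr_fun (s := Iic a) (fun z hz => F_zero h hz) measurableSet_Iic).2 integrableOn_zero
    · exact (F_cont a b).integrableOn_Ioc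

lemma integral_F_of_le {a b u : ℝ} (h : a < b) (hu : a ≤ u) :
    ∫ z in Iic u, F a b z = ∫ z in a..u, F a b z := by
  rw [← Iic_union_Ioc_eq_Iic hu,
    setIntegral_union (Iic_disjoint_Ioc (le_refl a)) measurableSet_Ioc
      ((integrableOn_congr_fun (s := Iic a) (fun z hz => F_zero h hz) measurableSet_Iic).2 integrableOn_zero)
      ((F_cont a b).integrableOn_Ioc),
    setIntegral_congr_fun (s := Iic a) measurableSet_Iic (fun z hz => F_zero h hz),
    integral_zero, zero_add, intervalIntegral.integral_of_le hu]

lemma integral_lin {a b c u : ℝ} (h : a < b) :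
    ∫ z in c..u, (z - a) / (b - a) = ((u - a)^2 - (c - a)^2) / (2*(b - a)) := by
  have : ∀ z : ℝ, (z - a) / (b - a) = (b-a)⁻¹ * (z - a) := fun z => by field_simp
  simp_rw [this]
  rw [intervalIntegral.integral_const_mul]
  rw [intervalIntegral.integral_comp_sub_right (fun x => x) a, integral_id]
  field_simp

lemma integral_F_mid {a b u : ℝ} (h : a < b) (hu : a ≤ u) (hub : u ≤ b) :
    ∫ z in Iic u, F a b z = (u - a)^2 / (2*(b - a)) := by
  rw [integral_F_of_le h hu,
    intervalIntegral.integral_congr (g := fun z => (z-a)/(b-a))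
      (fun z hz => F_eq_lin h (by rw [uIcc_of_le hu] at hz; exact hz.1) (by rw [uIcc_of_le hu] at hz; exact le_trans hz.2 hub)),
    integral_lin h]
  simp

lemma integral_F_top {a b u : ℝ} (h : a < b) (hu : b ≤ u) :
    ∫ z in Iic u, F a b z = u - (a + b)/2 := by
  rw [integral_F_of_le h (by linarith),
    ← intervalIntegral.integral_add_adjacent_intervals (b := b)
      (((F_cont a b).intervalIntegrable a b)) (((F_cont a b).intervalIntegrable b u)),
    intervalIntegral.integral_congr (g := fun z => (z-a)/(b-a))
      (fun z hz => F_eq_lin h (by rw [uIcc_of_le h.le] at hz; exact hz.1) (by rw [uIcc_of_le h.le] at hz; exact hz.2)),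
    intervalIntegral.integral_congr (g := fun _ => (1:ℝ))
      (fun z hz => F_one h (by rw [uIcc_of_le hu] at hz; exact hz.1)),
    integral_lin h, intervalIntegral.integral_const]
  have hba : b - a ≠ 0 := by linarith
  rw [smul_eq_mul]
  field_simp
  ring

lemma integral_F_bot {a b u : ℝ} (h : a < b) (hu : u ≤ a) :
    ∫ z in Iic u, F a b z = 0 := by
  rw [setIntegral_congr_fun measurableSet_Iic (fun z hz => F_zero h (le_trans hz hu)),
    integral_zero]

lemma integral_F_pos {a b u : ℝ} (h : a < b) (hu : a < u) :
    0 < ∫ z in Iic u, F a b z := by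
  rcases le_total u b with hub | hub
  · rw [integral_F_mid h hu.le hub]
    exact div_pos (pow_pos (sub_pos.2 hu) 2) (by linarith)
  · rw [integral_F_top h hub]; linarith


lemma map_meas (c ρ μ : ℝ) : Measurable (fun z : ℝ => c + ρ * (z - μ)) := by fun_prop

lemma cdf_map_pos {aN bN c ρ μ : ℝ} (h : aN < bN) (hρ : 0 < ρ) :
    cdf ((unif aN bN).map (fun z => c + ρ * (z - μ))) =
      fun u => F (c + ρ * (aN - μ)) (c + ρ * (bN - μ)) u := by
  have hP := unif_prob h
  have : IsProbabilityMeasure ((unif aN bN).map (fun z => c + ρ * (z - μ))) :=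
    Measure.isProbabilityMeasure_map (map_meas c ρ μ).aemeasurable
  funext u
  rw [cdf_eq_real, measureReal_def, Measure.map_apply (map_meas c ρ μ) measurableSet_Iic]
  have hpre : (fun z : ℝ => c + ρ * (z - μ)) ⁻¹' Iic u = Iic ((u - c)/ρ + μ) := by
    ext z
    simp only [mem_preimage, mem_Iic]
    rw [← sub_le_iff_le_add, le_div_iff₀ hρ]
    constructor <;> intro hz <;> nlinarith [hz]
  rw [hpre, ← measureReal_def, ← cdf_eq_real, cdf_unif h]
  show F aN bN ((u - c)/ρ + μ) = F (c + ρ * (aN - μ)) (c + ρ * (bN - μ)) u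
  unfold F
  congr 2
  rw [div_eq_div_iff (by linarith) (by nlinarith)]
  field_simp
  ring

lemma cdf_map_zero {aN bN c μ : ℝ} (h : aN < bN) :
    cdf ((unif aN bN).map (fun z => c + (0:ℝ) * (z - μ))) = fun u => Fd c u := by
  have hP := unif_prob h
  have hmap : (unif aN bN).map (fun z => c + (0:ℝ) * (z - μ)) = Measure.dirac c := by
    have : (fun z : ℝ => c + (0:ℝ) * (z - μ)) = fun _ => c := by funext z; ring
    rw [this, Measure.map_const, measure_univ, one_smul]
  rw [hmap]
  funext u
  rw [cdf_eq_real, measureReal_def, Measure.dirac_apply' c measurableSet_Iic]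
  unfold Fd
  by_cases hc : c ≤ u
  · rw [if_pos hc, indicator_of_mem (mem_Iic.2 hc)]; simp
  · rw [if_neg hc, indicator_of_notMem (fun hm => hc (mem_Iic.1 hm))]; simp

lemma Fd_eqOn (c u : ℝ) :
    EqOn (fun z => Fd c z) ((Icc c u).indicator fun _ => (1:ℝ)) (Iic u) := by
  intro z hz
  by_cases h1 : c ≤ z
  · simp only [Fd, if_pos h1, indicator_of_mem (mem_Icc.2 ⟨h1, mem_Iic.1 hz⟩)]
  · simp only [Fd, if_neg h1, indicator_of_notMem (fun hm => h1 (mem_Icc.1 hm).1)]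

lemma integrableFd (c u : ℝ) : IntegrableOn (fun z => Fd c z) (Iic u) := by
  refine (integrableOn_congr_fun (s := Iic u) (Fd_eqOn c u) measurableSet_Iic).2 ?_
  exact ((integrable_indicator_iff measurableSet_Icc).2
    (integrableOn_const measure_Icc_lt_top.ne)).integrableOn

lemma integral_Fd_top {c u : ℝ} (hu : c ≤ u) : ∫ z in Iic u, Fd c z = u - c := by
  rw [setIntegral_congr_fun (s := Iic u) measurableSet_Iic (Fd_eqOn c u),
    setIntegral_indicator measurableSet_Icc,
    inter_eq_self_of_subset_right Icc_subset_Iic_self,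
    setIntegral_const, Real.volume_real_Icc_of_le hu, smul_eq_mul, mul_one]

lemma integral_Fd_bot {c u : ℝ} (hu : u < c) : ∫ z in Iic u, Fd c z = 0 := by
  rw [setIntegral_congr_fun (s := Iic u) measurableSet_Iic
    (fun z hz => by unfold Fd; rw [if_neg (by simp only [mem_Iic] at hz; intro h1; linarith)]),
    integral_zero]


lemma key {aN bN aS bS c ρ : ℝ} (hN : aN < bN) (hS : aS < bS) (hρ : 0 ≤ ρ)
    (hssd : SSD ((unif aN bN).map (fun z => c + ρ * (z - (aN + bN)/2))) (unif aS bS)) :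
    (aS + bS)/2 ≤ c ∧ aS ≤ c + ρ * (aN - (aN + bN)/2) := by
  rcases hρ.lt_or_eq with hρ' | hρ'
  · have hαβ : c + ρ * (aN - (aN + bN)/2) < c + ρ * (bN - (aN + bN)/2) := by nlinarith
    have hI : ∀ u, (∫ z in Iic u, F (c + ρ * (aN - (aN + bN)/2)) (c + ρ * (bN - (aN + bN)/2)) z)
        - (∫ z in Iic u, F aS bS z) ≤ 0 := by
      intro u
      have h0 := hssd u
      rw [cdf_map_pos hN hρ', cdf_unif hS] at h0
      rwa [← integral_sub (integrableF _ _ u hαβ) (integrableF aS bS u hS)]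
    have hring : ρ * (aN - (aN + bN)/2) + ρ * (bN - (aN + bN)/2) = 0 := by ring
    constructor
    · have h1 := hI (max (c + ρ * (bN - (aN + bN)/2)) bS)
      rw [integral_F_top hαβ (le_max_left _ _), integral_F_top hS (le_max_right _ _)] at h1
      linarith
    · by_contra hlt
      push_neg at hlt
      have h2 := hI aS
      rw [integral_F_bot hS (le_refl aS)] at h2
      have := integral_F_pos hαβ hlt
      linarith
  · subst hρ'
    have hI : ∀ u, (∫ z in Iic u, Fd c z) - (∫ z in Iic u, F aS bS z) ≤ 0 := by
      intro u
      have h0 := hssd u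
      rw [cdf_map_zero hN, cdf_unif hS] at h0
      rwa [← integral_sub (integrableFd c u) (integrableF aS bS u hS)]
    have hc : (aS + bS)/2 ≤ c := by
      have h1 := hI (max c bS)
      rw [integral_Fd_top (le_max_left _ _), integral_F_top hS (le_max_right _ _)] at h1
      linarith
    refine ⟨hc, ?_⟩
    have : aS ≤ c := by
      by_contra hlt
      push_neg at hlt
      have h2 := hI aS
      rw [integral_F_bot hS (le_refl aS), integral_Fd_top hlt.le] at h2
      linarith
    linarith [this]


end Aux

/-- Under uniformly distributed coalitional values, nonemptiness of the SSD-core with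
transfer payments implies nonemptiness of the cores of both the mean game and the
lower bound game. -/
theorem ssd_core_uniform_necessary {N : Type*} [Fintype N] [DecidableEq N] [Nonempty N]
    (a b : Finset N → ℝ)
    (hab : ∀ S : Finset N, S.Nonempty → a S < b S)
    (d r : N → ℝ)
    (hr : ∀ i, 0 ≤ r i)
    (hdN : ∑ i : N, d i = (a Finset.univ + b Finset.univ) / 2)
    (hrN : ∑ i : N, r i = 1)
    (hssd : ∀ S : Finset N, S.Nonempty →
      SSD ((unif (a Finset.univ) (b Finset.univ)).map
          (fun z =>
            (∑ i ∈ S, d i) +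
              (∑ i ∈ S, r i) * (z - (a Finset.univ + b Finset.univ) / 2)))
        (unif (a S) (b S))) :
    (core (fun S => if S = ∅ then 0 else (a S + b S) / 2)).Nonempty ∧
      (core (fun S => if S = ∅ then 0 else a S)).Nonempty := by
  have hN : a Finset.univ < b Finset.univ := hab _ Finset.univ_nonempty
  have hkey : ∀ S : Finset N, S.Nonempty →
      (a S + b S)/2 ≤ ∑ i ∈ S, d i ∧
        a S ≤ (∑ i ∈ S, d i) + (∑ i ∈ S, r i) * (a Finset.univ - (a Finset.univ + b Finset.univ)/2) :=
    fun S hS => key hN (hab S hS) (Finset.sum_nonneg fun i _ => hr i) (hssd S hS)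
  constructor
  · refine ⟨d, fun S => ?_, ?_⟩
    · by_cases hS : S = ∅
      · subst hS; simp
      · simp only [if_neg hS]
        exact (hkey S (Finset.nonempty_iff_ne_empty.2 hS)).1
    · simp only [if_neg (Finset.univ_nonempty (α := N)).ne_empty]
      exact hdN
  · refine ⟨fun i => d i + r i * (a Finset.univ - (a Finset.univ + b Finset.univ)/2),
      fun S => ?_, ?_⟩
    · rw [Finset.sum_add_distrib, ← Finset.sum_mul]
      by_cases hS : S = ∅
      · subst hS; simp
      · simp only [if_neg hS]
        exact (hkey S (Finset.nonempty_iff_ne_empty.2 hS)).2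
    · simp only [if_neg (Finset.univ_nonempty (α := N)).ne_empty]
      rw [Finset.sum_add_distrib, ← Finset.sum_mul, hdN, hrN]
      ring
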